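/- Let W be the graph product of cyclic groups determined by a labeled graph (Γ, m). Then the center of W is the special subgroup generated by the vertices adjacent to every other vertex of Γ, i.e., Z(W) = ⟨{v_i : d(v_i, v_j) ≤ 1 for all j}⟩. -/

import Mathlib

set_option linter.unusedSectionVars false
set_option maxHeartbeats 1000000

/-- Defining relations of the graph product of cyclic groups `W(Γ, m)`.
`m i = 0` encodes infinite order (and gives the trivial relation). -/
def grels {N : ℕ} (G : SimpleGraph (Fin N)) (m : Fin N → ℕ) : Set (FreeGroup (Fin N)) :=
  {r | (∃ i, r = FreeGroup.of i ^ m i) ∨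
    ∃ i j, G.Adj i j ∧
      r = FreeGroup.of i * FreeGroup.of j * (FreeGroup.of i)⁻¹ * (FreeGroup.of j)⁻¹}

open Function in
section
open Monoid Function

namespace AmalgCenter

variable {ι : Type*} {G : ι → Type*} [∀ i, Group (G i)] {H : Type*} [Group H]
  {φ : ∀ i, H →* G i} [DecidableEq ι] [∀ i, DecidableEq (G i)]

open PushoutI CoprodI Subgroup.IsComplement

theorem getLast?_map {α β : Type*} (f : α → β) (l : List α) :
    (l.map f).getLast? = l.getLast?.map f := by
  rw [← List.head?_reverse, ← List.map_reverse, List.head?_map, List.head?_reverse]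

def wsnoc (w : CoprodI.Word G) (i : ι) (g : G i) (hg : g ≠ 1)
    (hl : (w.toList.map Sigma.fst).getLast? ≠ some i) : CoprodI.Word G where
  toList := w.toList ++ [⟨i, g⟩]
  ne_one := by
    intro l hlmem
    rcases List.mem_append.1 hlmem with h | h
    · exact w.ne_one l h
    · simp only [List.mem_singleton] at h; subst h; exact hg
  chain_ne := by
    rw [List.isChain_append]
    refine ⟨w.chain_ne, List.isChain_singleton _, ?_⟩
    intro x hx y hy
    simp only [List.head?_cons, Option.mem_def, Option.some.injEq] at hy
    subst hy
    intro hxy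
    apply hl
    rw [getLast?_map, hx]
    simp [hxy]

theorem wsnoc_toList (w : CoprodI.Word G) (i : ι) (g : G i) (hg : g ≠ 1)
    (hl : (w.toList.map Sigma.fst).getLast? ≠ some i) :
    (wsnoc w i g hg hl).toList = w.toList ++ [⟨i, g⟩] := rfl

theorem wsnoc_prod (w : CoprodI.Word G) (i : ι) (g : G i) (hg : g ≠ 1)
    (hl : (w.toList.map Sigma.fst).getLast? ≠ some i) :
    (wsnoc w i g hg hl).prod = w.prod * CoprodI.of g := by
  simp [CoprodI.Word.prod, wsnoc]

theorem fstIdx_eq_head?_map (w : CoprodI.Word G) :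
    w.fstIdx = (w.toList.map Sigma.fst).head? := by
  rw [CoprodI.Word.fstIdx, List.head?_map]

/-- a reduced word representing `w.prod * base h`, with the same index list,
provided `w` is nonempty. -/
theorem exists_reduced_mul_base (w : CoprodI.Word G) (hw : Reduced φ w) (h : H)
    (hne : w.toList ≠ []) :
    ∃ w' : CoprodI.Word G, Reduced φ w' ∧
      w'.toList.map Sigma.fst = w.toList.map Sigma.fst ∧
      ofCoprodI w'.prod = (ofCoprodI w.prod : PushoutI φ) * base φ h := by
  induction w using CoprodI.Word.consRecOn with
  | empty => exact absurd rfl hne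
  | cons i g w h1 h2 ih =>
    have hgr : g ∉ (φ i).range := hw ⟨i, g⟩ List.mem_cons_self
    by_cases hwe : w.toList = []
    · -- single letter word
      have hprod : w.prod = 1 := by
        rw [CoprodI.Word.prod, hwe]; rfl
      have hg1 : g * φ i h ∉ (φ i).range := fun ⟨y, hy⟩ =>
        hgr ⟨y * h⁻¹, by rw [map_mul, map_inv, hy]; group⟩
      have hg1' : g * φ i h ≠ 1 := fun hc => hg1 (hc ▸ (φ i).range.one_mem)
      have hfst : w.fstIdx ≠ some i := h1
      refine ⟨CoprodI.Word.cons (g * φ i h) w h1 hg1', ?_, ?_, ?_⟩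
      · intro l hl
        rcases List.mem_cons.1 (by simpa [CoprodI.Word.cons] using hl) with rfl | hl'
        · exact hg1
        · exact absurd (hwe ▸ hl') List.not_mem_nil
      · simp [CoprodI.Word.cons, hwe]
      · rw [CoprodI.Word.prod_cons, CoprodI.Word.prod_cons, hprod]
        simp only [mul_one, map_mul, ofCoprodI_of]
        rw [of_apply_eq_base φ i h]
    · obtain ⟨w', hred', hidx', hprod'⟩ :=
        ih (fun l hl => hw l (List.mem_cons_of_mem _ hl)) hwe
      have hfst' : w'.fstIdx ≠ some i := by
        rw [fstIdx_eq_head?_map, hidx', ← fstIdx_eq_head?_map]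
        exact h1
      have hg1 : g ≠ 1 := fun hc => hgr (hc ▸ (φ i).range.one_mem)
      refine ⟨CoprodI.Word.cons g w' hfst' hg1, ?_, ?_, ?_⟩
      · intro l hl
        rcases List.mem_cons.1 (by simpa [CoprodI.Word.cons] using hl) with rfl | hl'
        · exact hgr
        · exact hred' l hl'
      · simp [CoprodI.Word.cons, hidx']
      · rw [CoprodI.Word.prod_cons, CoprodI.Word.prod_cons]
        simp only [map_mul, ofCoprodI_of]
        rw [hprod', mul_assoc]

/-- a reduced word representing the inverse, with reversed index list. -/
theorem exists_reduced_inv (w : CoprodI.Word G) (hw : Reduced φ w) :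
    ∃ w' : CoprodI.Word G, Reduced φ w' ∧
      w'.toList.map Sigma.fst = (w.toList.map Sigma.fst).reverse ∧
      ofCoprodI w'.prod = (ofCoprodI w.prod : PushoutI φ)⁻¹ := by
  induction w using CoprodI.Word.consRecOn with
  | empty => exact ⟨CoprodI.Word.empty, fun l hl => absurd hl List.not_mem_nil, by
      simp [CoprodI.Word.empty], by simp⟩
  | cons i g w h1 h2 ih =>
    obtain ⟨w', hred', hidx', hprod'⟩ := ih (fun l hl => hw l (List.mem_cons_of_mem _ hl))
    have hgr : g ∉ (φ i).range := hw ⟨i, g⟩ List.mem_cons_self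
    have hginv : g⁻¹ ∉ (φ i).range := fun hc => hgr (by simpa using (φ i).range.inv_mem hc)
    have hginv1 : g⁻¹ ≠ 1 := fun hc => hginv (hc ▸ (φ i).range.one_mem)
    have hlast : (w'.toList.map Sigma.fst).getLast? ≠ some i := by
      rw [hidx', List.getLast?_reverse, ← fstIdx_eq_head?_map]
      exact h1
    refine ⟨wsnoc w' i g⁻¹ hginv1 hlast, ?_, ?_, ?_⟩
    · intro l hl
      rw [wsnoc_toList] at hl
      rcases List.mem_append.1 hl with h | h
      · exact hred' l h
      · simp only [List.mem_singleton] at h; subst h; exact hginv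
    · rw [wsnoc_toList]
      simp [hidx', List.reverse_cons]
    · rw [wsnoc_prod, CoprodI.Word.prod_cons]
      simp only [map_mul, ofCoprodI_of, mul_inv_rev, hprod', map_inv]


section sigma

variable (d : PushoutI.NormalWord.Transversal φ)

/-- letters of a normal word are not in the image of the base group -/
theorem reduced_toWord (w : PushoutI.NormalWord d) : Reduced φ w.toWord := by
  rintro ⟨i, g⟩ hmem hrange
  have hset : g ∈ d.set i := w.normalized i g hmem
  have hne : g ≠ 1 := w.ne_one ⟨i, g⟩ hmem
  obtain ⟨y, hy⟩ := hrange
  have hy' : g ∈ ((φ i).range : Subgroup (G i)) := ⟨y, hy⟩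
  have := (d.compl i).1
    (a₁ := (⟨⟨g, hy'⟩, ⟨1, d.one_mem i⟩⟩))
    (a₂ := (⟨⟨1, (φ i).range.one_mem⟩, ⟨g, hset⟩⟩)) (by simp)
  rw [Prod.ext_iff, Subtype.ext_iff, Subtype.ext_iff] at this
  exact hne this.1

/-- the index sequence of the normal form of an element -/
noncomputable def sig (x : PushoutI φ) : List ι :=
  ((x • (PushoutI.NormalWord.empty : PushoutI.NormalWord d)).toList.map Sigma.fst)

theorem smul_empty_prod (x : PushoutI φ) :
    ((x • (PushoutI.NormalWord.empty : PushoutI.NormalWord d))).prod = x := by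
  rw [PushoutI.NormalWord.prod_smul, PushoutI.NormalWord.prod_empty, mul_one]

theorem sig_fstIdx (x : PushoutI φ) :
    (x • (PushoutI.NormalWord.empty : PushoutI.NormalWord d)).fstIdx = (sig d x).head? := by
  rw [CoprodI.Word.fstIdx, sig, List.head?_map]

theorem sig_base (h : H) : sig d (PushoutI.base φ h) = [] := by
  rw [sig, PushoutI.NormalWord.base_smul_def]
  rfl

theorem sig_of_reduced (w : CoprodI.Word G) (hw : Reduced φ w) :
    sig d (PushoutI.ofCoprodI w.prod) = w.toList.map Sigma.fst := by
  obtain ⟨w', hprod, hmap⟩ := hw.exists_normalWord_prod_eq d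
  rw [sig, ← hprod, PushoutI.NormalWord.prod_smul_empty, hmap]

theorem word_prod_eq_one_of_nil (w : CoprodI.Word G) (hne : w.toList = []) : w.prod = 1 := by
  rw [CoprodI.Word.prod, hne]
  rfl

theorem sig_reduced_mul_base (w : CoprodI.Word G) (hw : Reduced φ w) (h : H) :
    sig d (PushoutI.ofCoprodI w.prod * PushoutI.base φ h) = w.toList.map Sigma.fst := by
  by_cases hne : w.toList = []
  · rw [word_prod_eq_one_of_nil w hne, map_one, one_mul, sig_base, hne]
    rfl
  · obtain ⟨w', hred', hidx', hprod'⟩ := exists_reduced_mul_base w hw h hne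
    rw [← hprod', sig_of_reduced d w' hred', hidx']

theorem sig_inv (x : PushoutI φ) : sig d x⁻¹ = (sig d x).reverse := by
  set w := x • (PushoutI.NormalWord.empty : PushoutI.NormalWord d) with hw
  have hx : x = w.prod := (smul_empty_prod d x).symm
  have hprod : w.prod = PushoutI.base φ w.head * PushoutI.ofCoprodI w.toWord.prod := rfl
  obtain ⟨w', hred', hidx', hprod'⟩ := exists_reduced_inv w.toWord (reduced_toWord d w)
  have hxinv : x⁻¹ = PushoutI.ofCoprodI w'.prod * PushoutI.base φ w.head⁻¹ := by
    rw [hx, hprod, mul_inv_rev, hprod', map_inv]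
  rw [hxinv, sig_reduced_mul_base d w' hred', hidx']
  rfl

theorem sig_cons (u : ι) (c : G u) (hc : c ∉ (φ u).range) (x : PushoutI φ)
    (hfst : (x • (PushoutI.NormalWord.empty : PushoutI.NormalWord d)).fstIdx ≠ some u) :
    sig d (PushoutI.of u c * x) = u :: sig d x := by
  have h1 : (PushoutI.of u c * x) • (PushoutI.NormalWord.empty : PushoutI.NormalWord d)
      = PushoutI.of u c • (x • (PushoutI.NormalWord.empty : PushoutI.NormalWord d)) :=
    mul_smul _ _ _
  rw [sig, h1, ← PushoutI.NormalWord.cons_eq_smul (hmw := hfst) (hgr := hc)]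
  rfl

theorem exists_decomp (w : PushoutI.NormalWord d) :
    ∀ u : ι, w.fstIdx = some u →
    ∃ g₁ : G u, g₁ ∉ (φ u).range ∧ ∃ y : PushoutI φ,
      w.prod = PushoutI.of u g₁ * y ∧
      (y • (PushoutI.NormalWord.empty : PushoutI.NormalWord d)).fstIdx ≠ some u ∧
      (y • (PushoutI.NormalWord.empty : PushoutI.NormalWord d)).toList.length + 1
        = w.toList.length := by
  induction w using PushoutI.NormalWord.consRecOn with
  | empty =>
    intro u hu
    simp [CoprodI.Word.fstIdx, PushoutI.NormalWord.empty] at hu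
  | cons i g w hmw hgn hgr hw1 ih =>
    intro u hu
    have hi : i = u := by
      have : (PushoutI.NormalWord.cons g w hmw hgr).fstIdx = some i := rfl
      rw [this] at hu
      exact Option.some.inj hu
    subst hi
    refine ⟨g, hgr, w.prod, ?_, ?_, ?_⟩
    · rw [PushoutI.NormalWord.prod_cons]
    · rw [PushoutI.NormalWord.prod_smul_empty]
      exact hmw
    · rw [PushoutI.NormalWord.prod_smul_empty]
      rfl
  | base h w hw1 ih =>
    intro u hu
    have hfst : w.fstIdx = some u := by
      rw [PushoutI.NormalWord.base_smul_def] at hu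
      exact hu
    obtain ⟨g₁, hg₁, y, hy, hfst', hlen⟩ := ih u hfst
    refine ⟨φ u h * g₁, ?_, y, ?_, hfst', ?_⟩
    · intro hmem
      exact hg₁ (by
        have : g₁ = (φ u h)⁻¹ * (φ u h * g₁) := by group
        rw [this, ← map_inv]
        exact (φ u).range.mul_mem (MonoidHom.mem_range.2 ⟨h⁻¹, rfl⟩) hmem)
    · rw [PushoutI.NormalWord.prod_smul, hy, map_mul, ← mul_assoc,
        PushoutI.of_apply_eq_base]
    · simp only [PushoutI.NormalWord.base_smul_def]
      exact hlen

theorem sig_len_le (u : ι) (g : G u) (x : PushoutI φ)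
    (hfst : (x • (PushoutI.NormalWord.empty : PushoutI.NormalWord d)).fstIdx = some u) :
    (sig d (PushoutI.of u g * x)).length ≤ (sig d x).length := by
  obtain ⟨g₁, hg₁, y, hy, hfst', hlen⟩ :=
    exists_decomp d (x • (PushoutI.NormalWord.empty : PushoutI.NormalWord d)) u hfst
  rw [smul_empty_prod] at hy
  have hx : PushoutI.of u g * x = PushoutI.of u (g * g₁) * y := by
    rw [hy, map_mul, mul_assoc]
  by_cases hmem : g * g₁ ∈ (φ u).range
  · obtain ⟨h', hh'⟩ := hmem
    have : PushoutI.of u (g * g₁) = PushoutI.base φ h' := by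
      rw [← hh', PushoutI.of_apply_eq_base]
    rw [hx, this, sig, mul_smul, PushoutI.NormalWord.base_smul_def]
    simp only [sig, List.length_map] at hlen ⊢
    omega
  · rw [hx, sig_cons d u (g * g₁) hmem y hfst']
    simp only [sig, List.length_map, List.length_cons] at hlen ⊢
    omega

theorem aux_center {z : PushoutI φ} (hz : ∀ x, z * x = x * z) {u : ι} {c : G u}
    (hc : c ∉ (φ u).range) (hne : sig d z ≠ []) (hhd : (sig d z).head? ≠ some u) :
    False := by
  have hcinv : c⁻¹ ∉ (φ u).range := fun hmem => hc (by simpa using (φ u).range.inv_mem hmem)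
  have E1 : sig d (PushoutI.of u c * z) = u :: sig d z := by
    apply sig_cons d u c hc z
    rw [sig_fstIdx]
    exact hhd
  have hcomm : z * PushoutI.of u c = PushoutI.of u c * z := hz _
  have hinvform : z * PushoutI.of u c = (PushoutI.of u c⁻¹ * z⁻¹)⁻¹ := by
    rw [mul_inv_rev, inv_inv, map_inv, inv_inv]
  by_cases hcase : (sig d z⁻¹).head? = some u
  · have hle : (sig d (PushoutI.of u c⁻¹ * z⁻¹)).length ≤ (sig d z⁻¹).length := by
      apply sig_len_le d u c⁻¹ z⁻¹
      rw [sig_fstIdx]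
      exact hcase
    have h1 : sig d (z * PushoutI.of u c) = (sig d (PushoutI.of u c⁻¹ * z⁻¹)).reverse := by
      rw [hinvform, sig_inv]
    have h2 : sig d (z * PushoutI.of u c) = u :: sig d z := by rw [hcomm, E1]
    rw [h2] at h1
    have := congrArg List.length h1
    simp only [List.length_cons, List.length_reverse] at this
    rw [sig_inv, List.length_reverse] at hle
    omega
  · have h3 : sig d (PushoutI.of u c⁻¹ * z⁻¹) = u :: sig d z⁻¹ := by
      apply sig_cons d u c⁻¹ hcinv z⁻¹
      rw [sig_fstIdx]
      exact hcase
    have h1 : sig d (z * PushoutI.of u c) = (u :: sig d z⁻¹).reverse := by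
      rw [hinvform, sig_inv, h3]
    have h2 : sig d (z * PushoutI.of u c) = u :: sig d z := by rw [hcomm, E1]
    rw [h2, sig_inv d z, List.reverse_cons] at h1
    simp only [List.reverse_reverse] at h1
    obtain ⟨hd, tl, hsz⟩ := List.exists_cons_of_ne_nil hne
    rw [hsz, List.cons_append] at h1
    injection h1 with h1a h1b
    apply hhd
    rw [hsz]
    simp [h1a]

end sigma

/-- If `z` is central in an amalgamated product with two factors, each strictly
containing the base, then `z` is in the image of the base group. -/
theorem center_mem_base_range {i j : ι} (hij : i ≠ j) (hφ : ∀ k, Injective (φ k))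
    {a : G i} (ha : a ∉ (φ i).range) {b : G j} (hb : b ∉ (φ j).range)
    {z : PushoutI φ} (hz : ∀ x, z * x = x * z) : z ∈ (PushoutI.base φ).range := by
  obtain ⟨d⟩ := PushoutI.NormalWord.transversal_nonempty φ hφ
  by_cases hs : sig d z = []
  · have hlist : (z • (PushoutI.NormalWord.empty : PushoutI.NormalWord d)).toList = [] :=
      List.map_eq_nil_iff.mp hs
    have hzeq : z = (z • (PushoutI.NormalWord.empty : PushoutI.NormalWord d)).prod :=
      (smul_empty_prod d z).symm
    have hrfl : (z • (PushoutI.NormalWord.empty : PushoutI.NormalWord d)).prod =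
        PushoutI.base φ (z • (PushoutI.NormalWord.empty : PushoutI.NormalWord d)).head *
          PushoutI.ofCoprodI
            ((z • (PushoutI.NormalWord.empty : PushoutI.NormalWord d)).toWord.prod) := rfl
    have h2 : (z • (PushoutI.NormalWord.empty : PushoutI.NormalWord d)).prod =
        PushoutI.base φ (z • (PushoutI.NormalWord.empty : PushoutI.NormalWord d)).head := by
      rw [hrfl, word_prod_eq_one_of_nil _ hlist, map_one, mul_one]
    exact ⟨_, h2.symm.trans (smul_empty_prod d z)⟩
  · by_cases hf : (sig d z).head? = some i
    · exact ((aux_center d hz hb hs (by rw [hf]; simp [hij])).elim)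
    · exact ((aux_center d hz ha hs hf).elim)

end AmalgCenter

end

namespace GraphProd

variable {N : ℕ} (G : SimpleGraph (Fin N)) (m : Fin N → ℕ)

abbrev W := PresentedGroup (grels G m)

def xg (i : Fin N) : W G m := PresentedGroup.of i

theorem lift_rels {K : Type*} [Group K] (f : Fin N → K)
    (h1 : ∀ i, f i ^ m i = 1) (h2 : ∀ i j, G.Adj i j → f i * f j = f j * f i) :
    ∀ r ∈ grels G m, FreeGroup.lift f r = 1 := by
  rintro r (⟨i, rfl⟩ | ⟨i, j, hadj, rfl⟩)
  · rw [map_pow, FreeGroup.lift_apply_of, h1]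
  · simp only [map_mul, map_inv, FreeGroup.lift_apply_of]
    rw [h2 i j hadj]
    group

/-- universal property packaged -/
noncomputable def mkHom {K : Type*} [Group K] (f : Fin N → K)
    (h1 : ∀ i, f i ^ m i = 1) (h2 : ∀ i j, G.Adj i j → f i * f j = f j * f i) :
    W G m →* K :=
  PresentedGroup.toGroup (lift_rels G m f h1 h2)

@[simp]
theorem mkHom_of {K : Type*} [Group K] (f : Fin N → K) (h1 : ∀ i, f i ^ m i = 1)
    (h2 : ∀ i j, G.Adj i j → f i * f j = f j * f i) (k : Fin N) :
    mkHom G m f h1 h2 (xg G m k) = f k :=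
  PresentedGroup.toGroup.of _

theorem xg_pow (i : Fin N) : xg G m i ^ m i = 1 := by
  have h : xg G m i ^ m i = PresentedGroup.mk (grels G m) (FreeGroup.of i ^ m i) := by
    rw [map_pow]; rfl
  rw [h]
  exact (QuotientGroup.eq_one_iff _).2 (Subgroup.subset_normalClosure (Or.inl ⟨i, rfl⟩))

theorem xg_comm {i j : Fin N} (h : G.Adj i j) :
    xg G m i * xg G m j = xg G m j * xg G m i := by
  have h1 : xg G m i * xg G m j * (xg G m i)⁻¹ * (xg G m j)⁻¹
      = PresentedGroup.mk (grels G m)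
        (FreeGroup.of i * FreeGroup.of j * (FreeGroup.of i)⁻¹ * (FreeGroup.of j)⁻¹) := by
    simp only [map_mul, map_inv]; rfl
  have h2 : xg G m i * xg G m j * (xg G m i)⁻¹ * (xg G m j)⁻¹ = 1 := by
    rw [h1]
    exact (QuotientGroup.eq_one_iff _).2
      (Subgroup.subset_normalClosure (Or.inr ⟨i, j, h, rfl⟩))
  have h3 : xg G m i * xg G m j * (xg G m i)⁻¹ = xg G m j := mul_inv_eq_one.mp h2
  calc xg G m i * xg G m j = (xg G m i * xg G m j * (xg G m i)⁻¹) * xg G m i := by group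
  _ = xg G m j * xg G m i := by rw [h3]

theorem mem_gen (w : W G m) (H : Subgroup (W G m)) (h : ∀ k, xg G m k ∈ H) : w ∈ H :=
  PresentedGroup.generated_by _ H h w

theorem hom_eq {K : Type*} [Group K] {f g : W G m →* K}
    (h : ∀ k, f (xg G m k) = g (xg G m k)) : ∀ w, f w = g w := by
  have : f = g := PresentedGroup.ext h
  intro w; rw [this]

/-- special subgroup -/
def WS (S : Set (Fin N)) : Subgroup (W G m) := Subgroup.closure (xg G m '' S)

theorem xg_mem_WS {S : Set (Fin N)} {k : Fin N} (hk : k ∈ S) : xg G m k ∈ WS G m S :=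
  Subgroup.subset_closure ⟨k, hk, rfl⟩

open scoped Classical in
/-- the retraction onto a special subgroup -/
noncomputable def piS (S : Set (Fin N)) : W G m →* W G m :=
  mkHom G m (fun k => if k ∈ S then xg G m k else 1)
    (by
      intro k
      by_cases hk : k ∈ S
      · simp [hk, xg_pow]
      · simp [hk])
    (by
      intro a b hadj
      by_cases ha : a ∈ S <;> by_cases hb : b ∈ S <;>
        simp [ha, hb, xg_comm G m hadj])

open scoped Classical in
@[simp]
theorem piS_of (S : Set (Fin N)) (k : Fin N) :
    piS G m S (xg G m k) = if k ∈ S then xg G m k else 1 :=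
  mkHom_of _ _ _ _ _ _

theorem piS_fix {S : Set (Fin N)} {w : W G m} (hw : w ∈ WS G m S) : piS G m S w = w := by
  induction hw using Subgroup.closure_induction with
  | mem x hx =>
    obtain ⟨k, hk, rfl⟩ := hx
    rw [piS_of, if_pos hk]
  | one => exact map_one _
  | mul x y hx hy ihx ihy => rw [map_mul, ihx, ihy]
  | inv x hx ihx => rw [map_inv, ihx]

theorem piS_mem (S : Set (Fin N)) (w : W G m) : piS G m S w ∈ WS G m S := by
  have : w ∈ (WS G m S).comap (piS G m S) := by
    apply mem_gen
    intro k
    simp only [Subgroup.mem_comap, piS_of]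
    by_cases hk : k ∈ S
    · rw [if_pos hk]; exact xg_mem_WS G m hk
    · rw [if_neg hk]; exact one_mem _
  exact this

theorem mem_WS_iff {S : Set (Fin N)} {w : W G m} :
    w ∈ WS G m S ↔ piS G m S w = w :=
  ⟨piS_fix G m, fun h => h ▸ piS_mem G m S w⟩

theorem piS_piS (S T : Set (Fin N)) (w : W G m) :
    piS G m S (piS G m T w) = piS G m (S ∩ T) w := by
  classical
  refine hom_eq G m (f := (piS G m S).comp (piS G m T)) (g := piS G m (S ∩ T)) ?_ w
  intro k
  simp only [MonoidHom.comp_apply, piS_of]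
  by_cases hT : k ∈ T <;> by_cases hS : k ∈ S <;>
    simp [hS, hT, Set.mem_inter_iff]

theorem mem_WS_inter {S T : Set (Fin N)} {w : W G m}
    (hS : w ∈ WS G m S) (hT : w ∈ WS G m T) : w ∈ WS G m (S ∩ T) := by
  rw [mem_WS_iff, ← piS_piS, piS_fix G m hT, piS_fix G m hS]

/-- exponent-sum homomorphism detecting the generator `i` -/
noncomputable def rho (i : Fin N) : W G m →* Multiplicative (ZMod (m i)) :=
  mkHom G m (fun k => if k = i then Multiplicative.ofAdd (1 : ZMod (m i)) else 1)
    (by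
      intro k
      by_cases hk : k = i
      · subst hk
        show (if k = k then Multiplicative.ofAdd (1 : ZMod (m k)) else 1) ^ m k = 1
        rw [if_pos rfl, ← ofAdd_nsmul, nsmul_eq_mul, mul_one, ZMod.natCast_self]
        rfl
      · simp [hk])
    (by intro a b _; exact mul_comm _ _)

@[simp]
theorem rho_of (i k : Fin N) :
    rho G m i (xg G m k) = if k = i then Multiplicative.ofAdd (1 : ZMod (m i)) else 1 :=
  mkHom_of _ _ _ _ _ _

theorem rho_WS {i : Fin N} {S : Set (Fin N)} (hiS : i ∉ S) {w : W G m}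
    (hw : w ∈ WS G m S) : rho G m i w = 1 := by
  induction hw using Subgroup.closure_induction with
  | mem x hx =>
    obtain ⟨k, hk, rfl⟩ := hx
    rw [rho_of, if_neg (fun h => hiS (by rw [← h]; exact hk))]
  | one => exact map_one _
  | mul x y hx hy ihx ihy => rw [map_mul, ihx, ihy, mul_one]
  | inv x hx ihx => rw [map_inv, ihx, inv_one]

theorem xg_not_mem_WS {i : Fin N} {S : Set (Fin N)} (hiS : i ∉ S) (hmi : m i ≠ 1) :
    xg G m i ∉ WS G m S := by
  intro h
  have h1 : rho G m i (xg G m i) = 1 := rho_WS G m hiS h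
  rw [rho_of, if_pos rfl] at h1
  have h2 : (1 : ZMod (m i)) = 0 := by
    have := congrArg Multiplicative.toAdd h1
    simpa using this
  have h3 : ((1 : ℕ) : ZMod (m i)) = 0 := by exact_mod_cast h2
  exact hmi (Nat.dvd_one.mp ((ZMod.natCast_eq_zero_iff 1 (m i)).mp h3))

theorem xg_central {i : Fin N} (hi : ∀ j, j ≠ i → G.Adj i j) :
    xg G m i ∈ Subgroup.center (W G m) := by
  rw [Subgroup.mem_center_iff]
  intro g
  have hg : g ∈ Subgroup.centralizer {xg G m i} := by
    apply mem_gen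
    intro k
    rw [Subgroup.mem_centralizer_iff]
    rintro y ⟨rfl⟩
    by_cases hk : k = i
    · subst hk; rfl
    · exact xg_comm G m (hi k hk)
  exact (Subgroup.mem_centralizer_iff.mp hg (xg G m i) rfl).symm

section Crux

variable (i j : Fin N)

/-- the two factors of the amalgam decomposition -/
def fac (b : Bool) : Subgroup (W G m) := if b then WS G m {i}ᶜ else WS G m {j}ᶜ

theorem fac_true : fac G m i j true = WS G m {i}ᶜ := rfl

theorem fac_false : fac G m i j false = WS G m {j}ᶜ := rfl

theorem base_le (b : Bool) : WS G m ({i}ᶜ ∩ {j}ᶜ) ≤ fac G m i j b := by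
  cases b
  · rw [fac_false]
    exact Subgroup.closure_mono (Set.image_mono Set.inter_subset_right)
  · rw [fac_true]
    exact Subgroup.closure_mono (Set.image_mono Set.inter_subset_left)

/-- the base inclusion maps -/
def phiB (b : Bool) : ↥(WS G m ({i}ᶜ ∩ {j}ᶜ)) →* ↥(fac G m i j b) :=
  Subgroup.inclusion (base_le G m i j b)

theorem of_pow_eq_one (b : Bool) (x : ↥(fac G m i j b)) (n : ℕ)
    (hx : (x : W G m) ^ n = 1) :
    Monoid.PushoutI.of (φ := phiB G m i j) b x ^ n = 1 := by
  rw [← map_pow]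
  have hx1 : x ^ n = 1 := Subtype.ext (by rw [SubmonoidClass.coe_pow]; exact hx)
  rw [hx1, map_one]

theorem of_comm_of (b : Bool) (x y : ↥(fac G m i j b))
    (h : (x : W G m) * y = y * x) :
    Monoid.PushoutI.of (φ := phiB G m i j) b x * Monoid.PushoutI.of (φ := phiB G m i j) b y
      = Monoid.PushoutI.of (φ := phiB G m i j) b y
        * Monoid.PushoutI.of (φ := phiB G m i j) b x := by
  rw [← map_mul, ← map_mul]
  exact congrArg _ (Subtype.ext h)

theorem mem_compl_singleton {k l : Fin N} (h : k ≠ l) : k ∈ ({l}ᶜ : Set (Fin N)) := by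
  simp [h]

theorem of_true_eq_of_false (k : Fin N) (hki : k ≠ i) (hkj : k ≠ j)
    (h1 : xg G m k ∈ fac G m i j true) (h2 : xg G m k ∈ fac G m i j false) :
    Monoid.PushoutI.of (φ := phiB G m i j) true ⟨xg G m k, h1⟩
      = Monoid.PushoutI.of (φ := phiB G m i j) false ⟨xg G m k, h2⟩ := by
  have hb : xg G m k ∈ WS G m ({i}ᶜ ∩ {j}ᶜ) :=
    xg_mem_WS G m ⟨mem_compl_singleton hki, mem_compl_singleton hkj⟩
  have e1 : (⟨xg G m k, h1⟩ : ↥(fac G m i j true)) = phiB G m i j true ⟨xg G m k, hb⟩ :=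
    Subtype.ext rfl
  have e2 : (⟨xg G m k, h2⟩ : ↥(fac G m i j false)) = phiB G m i j false ⟨xg G m k, hb⟩ :=
    Subtype.ext rfl
  rw [e1, e2, Monoid.PushoutI.of_apply_eq_base, Monoid.PushoutI.of_apply_eq_base]

variable {i j}

theorem xg_mem_fac_true {k : Fin N} (hk : k ≠ i) : xg G m k ∈ fac G m i j true := by
  rw [fac_true]; exact xg_mem_WS G m (mem_compl_singleton hk)

theorem xg_mem_fac_false {k : Fin N} (hk : k ≠ j) : xg G m k ∈ fac G m i j false := by
  rw [fac_false]; exact xg_mem_WS G m (mem_compl_singleton hk)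

/-- the map from the graph product to the amalgam -/
noncomputable def kap (hij : i ≠ j) (hnadj : ¬ G.Adj i j) :
    W G m →* Monoid.PushoutI (phiB G m i j) :=
  mkHom G m
    (fun k =>
      if hk : k = i then
        Monoid.PushoutI.of (φ := phiB G m i j) false ⟨xg G m i, xg_mem_fac_false G m hij⟩
      else Monoid.PushoutI.of (φ := phiB G m i j) true ⟨xg G m k, xg_mem_fac_true G m hk⟩)
    (by
      intro k
      beta_reduce
      by_cases hk : k = i
      · rw [dif_pos hk]
        exact of_pow_eq_one G m i j false _ (m k) (by rw [hk]; exact xg_pow G m i)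
      · rw [dif_neg hk]
        exact of_pow_eq_one G m i j true _ _ (xg_pow G m k))
    (by
      intro a b hadj
      beta_reduce
      by_cases ha : a = i <;> by_cases hb : b = i
      · rw [dif_pos ha, dif_pos hb]
      · have hbj : b ≠ j := fun hc => hnadj (by rw [← ha, ← hc]; exact hadj)
        rw [dif_pos ha, dif_neg hb,
          of_true_eq_of_false G m i j b hb hbj _ (xg_mem_fac_false G m hbj)]
        exact of_comm_of G m i j false _ _ (xg_comm G m (by rw [← ha]; exact hadj))
      · have haj : a ≠ j := fun hc =>
          hnadj (G.adj_symm (by rw [← hc, ← hb]; exact hadj))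
        rw [dif_pos hb, dif_neg ha,
          of_true_eq_of_false G m i j a ha haj _ (xg_mem_fac_false G m haj)]
        exact of_comm_of G m i j false _ _ (xg_comm G m (by rw [← hb]; exact hadj))
      · rw [dif_neg ha, dif_neg hb]
        exact of_comm_of G m i j true _ _ (xg_comm G m hadj))

theorem kap_of (hij : i ≠ j) (hnadj : ¬ G.Adj i j) (k : Fin N) :
    kap G m hij hnadj (xg G m k) =
      if hk : k = i then
        Monoid.PushoutI.of (φ := phiB G m i j) false ⟨xg G m i, xg_mem_fac_false G m hij⟩
      else Monoid.PushoutI.of (φ := phiB G m i j) true ⟨xg G m k, xg_mem_fac_true G m hk⟩ :=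
  mkHom_of _ _ _ _ _ _

variable (i j) in
/-- the map from the amalgam back to the graph product -/
noncomputable def theta : Monoid.PushoutI (phiB G m i j) →* W G m :=
  Monoid.PushoutI.lift (fun b => (fac G m i j b).subtype)
    (WS G m ({i}ᶜ ∩ {j}ᶜ)).subtype (fun b => MonoidHom.ext fun x => rfl)

theorem theta_kap (hij : i ≠ j) (hnadj : ¬ G.Adj i j) (w : W G m) :
    theta G m i j (kap G m hij hnadj w) = w := by
  refine hom_eq G m (f := (theta G m i j).comp (kap G m hij hnadj))
    (g := MonoidHom.id _) ?_ w
  intro k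
  rw [MonoidHom.comp_apply, kap_of]
  by_cases hk : k = i
  · subst hk
    rw [dif_pos rfl, theta, Monoid.PushoutI.lift_of]
    rfl
  · rw [dif_neg hk, theta, Monoid.PushoutI.lift_of]
    rfl

theorem kap_fac_true (hij : i ≠ j) (hnadj : ¬ G.Adj i j) :
    ∀ (w : W G m) (hw : w ∈ fac G m i j true),
      kap G m hij hnadj w = Monoid.PushoutI.of (φ := phiB G m i j) true ⟨w, hw⟩ := by
  intro w hw
  rw [fac_true] at hw
  induction hw using Subgroup.closure_induction with
  | mem x hx =>
    obtain ⟨k, hk, rfl⟩ := hx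
    have hki : k ≠ i := hk
    rw [kap_of, dif_neg hki]
  | one => rw [map_one]; exact (map_one _).symm
  | mul x y hx hy ihx ihy =>
    rw [map_mul, ihx (by rw [fac_true]; exact hx), ihy (by rw [fac_true]; exact hy),
      ← map_mul]
    rfl
  | inv x hx ihx =>
    rw [map_inv, ihx (by rw [fac_true]; exact hx), ← map_inv]
    rfl

theorem kap_fac_false (hij : i ≠ j) (hnadj : ¬ G.Adj i j) :
    ∀ (w : W G m) (hw : w ∈ fac G m i j false),
      kap G m hij hnadj w = Monoid.PushoutI.of (φ := phiB G m i j) false ⟨w, hw⟩ := by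
  intro w hw
  rw [fac_false] at hw
  induction hw using Subgroup.closure_induction with
  | mem x hx =>
    obtain ⟨k, hk, rfl⟩ := hx
    have hkj : k ≠ j := hk
    by_cases hki : k = i
    · subst hki
      rw [kap_of, dif_pos rfl]
    · rw [kap_of, dif_neg hki]
      exact of_true_eq_of_false G m i j k hki hkj _ _
  | one => rw [map_one]; exact (map_one _).symm
  | mul x y hx hy ihx ihy =>
    rw [map_mul, ihx (by rw [fac_false]; exact hx), ihy (by rw [fac_false]; exact hy),
      ← map_mul]
    rfl
  | inv x hx ihx =>
    rw [map_inv, ihx (by rw [fac_false]; exact hx), ← map_inv]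
    rfl

theorem kap_surj (hij : i ≠ j) (hnadj : ¬ G.Adj i j) :
    Function.Surjective (kap G m hij hnadj) := by
  intro p
  induction p using Monoid.PushoutI.induction_on with
  | of b g =>
    cases b
    · exact ⟨↑g, by rw [kap_fac_false G m hij hnadj ↑g g.2]⟩
    · exact ⟨↑g, by rw [kap_fac_true G m hij hnadj ↑g g.2]⟩
  | base h =>
    refine ⟨↑(phiB G m i j true h), ?_⟩
    rw [kap_fac_true G m hij hnadj _ (phiB G m i j true h).2]
    rw [← Monoid.PushoutI.of_apply_eq_base (φ := phiB G m i j) true h]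
  | mul x y ihx ihy =>
    obtain ⟨a, rfl⟩ := ihx
    obtain ⟨b, rfl⟩ := ihy
    exact ⟨a * b, map_mul _ _ _⟩

theorem center_mem_del {z : W G m} (hz : z ∈ Subgroup.center (W G m))
    (hm1 : ∀ k, m k ≠ 1) {i j : Fin N} (hij : i ≠ j) (hnadj : ¬ G.Adj i j) :
    z ∈ WS G m {i}ᶜ := by
  classical
  have hzc : ∀ x, kap G m hij hnadj z * x = x * kap G m hij hnadj z := by
    intro x
    obtain ⟨w, rfl⟩ := kap_surj G m hij hnadj x
    rw [← map_mul, ← map_mul]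
    exact congrArg _ (Subgroup.mem_center_iff.mp hz w).symm
  have hφinj : ∀ b, Function.Injective (phiB G m i j b) :=
    fun b => Subgroup.inclusion_injective _
  have hjint : j ∉ ({i}ᶜ ∩ {j}ᶜ : Set (Fin N)) := fun hc => hc.2 rfl
  have hiint : i ∉ ({i}ᶜ ∩ {j}ᶜ : Set (Fin N)) := fun hc => hc.1 rfl
  have ha : (⟨xg G m j, xg_mem_fac_true G m (Ne.symm hij)⟩ : ↥(fac G m i j true))
      ∉ (phiB G m i j true).range := by
    rintro ⟨y, hy⟩
    have hcoe : (y : W G m) = xg G m j := congrArg Subtype.val hy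
    exact xg_not_mem_WS G m hjint (hm1 j) (hcoe ▸ y.2)
  have hb : (⟨xg G m i, xg_mem_fac_false G m hij⟩ : ↥(fac G m i j false))
      ∉ (phiB G m i j false).range := by
    rintro ⟨y, hy⟩
    have hcoe : (y : W G m) = xg G m i := congrArg Subtype.val hy
    exact xg_not_mem_WS G m hiint (hm1 i) (hcoe ▸ y.2)
  obtain ⟨y, hy⟩ := AmalgCenter.center_mem_base_range (i := true) (j := false)
    (by decide) hφinj ha hb hzc
  have h1 : theta G m i j (kap G m hij hnadj z) = z := theta_kap G m hij hnadj z
  rw [← hy] at h1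
  have h2 : (y : W G m) = z := by
    rw [← h1, theta, Monoid.PushoutI.lift_base]
    rfl
  rw [← h2]
  have := base_le G m i j true y.2
  rw [fac_true] at this
  exact this

end Crux

end GraphProd

theorem stmt9 {N : ℕ} (G : SimpleGraph (Fin N)) (m : Fin N → ℕ)
    (hm : ∀ i, m i = 0 ∨ IsPrimePow (m i)) :
    Subgroup.center (PresentedGroup (grels G m)) =
      Subgroup.closure
        {x : PresentedGroup (grels G m) |
          ∃ i : Fin N, (∀ j : Fin N, j ≠ i → G.Adj i j) ∧ x = PresentedGroup.of i} := by
  classical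
  apply le_antisymm
  · intro z hz
    set A : Set (Fin N) := {k | ∀ l, l ≠ k → G.Adj k l} with hA
    have hm1 : ∀ k, m k ≠ 1 := by
      intro k
      rcases hm k with h | h
      · omega
      · exact h.ne_one
    have key : ∀ T : Finset (Fin N),
        z ∈ GraphProd.WS G m {k | k ∈ A ∨ k ∉ T} := by
      intro T
      induction T using Finset.induction_on with
      | empty =>
        have huniv : {k : Fin N | k ∈ A ∨ k ∉ (∅ : Finset (Fin N))} = Set.univ := by
          ext k; simp
        rw [huniv]
        have htop : GraphProd.WS G m (Set.univ : Set (Fin N)) = ⊤ := by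
          rw [GraphProd.WS, Set.image_univ]
          exact PresentedGroup.closure_range_of _
        rw [htop]; trivial
      | @insert a T haT ih =>
        by_cases haA : a ∈ A
        · have hset : {k : Fin N | k ∈ A ∨ k ∉ insert a T} = {k | k ∈ A ∨ k ∉ T} := by
            ext k
            by_cases hk : k = a
            · subst hk; simp [haA]
            · simp [Finset.mem_insert, hk]
          rw [hset]; exact ih
        · obtain ⟨l, hl1, hl2⟩ : ∃ l, l ≠ a ∧ ¬ G.Adj a l := by
            by_contra hc
            push_neg at hc
            exact haA fun l hla => hc l hla
          have hdel : z ∈ GraphProd.WS G m {a}ᶜ :=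
            GraphProd.center_mem_del G m hz hm1 (i := a) (j := l) (Ne.symm hl1) hl2
          have hint := GraphProd.mem_WS_inter G m ih hdel
          have hset : ({k : Fin N | k ∈ A ∨ k ∉ T} ∩ {a}ᶜ)
              = {k | k ∈ A ∨ k ∉ insert a T} := by
            ext k
            by_cases hk : k = a
            · subst hk; simp [haA]
            · simp [Finset.mem_insert, hk]
          rw [hset] at hint
          exact hint
    have hzA : z ∈ GraphProd.WS G m A := by
      have hkey := key Finset.univ
      have hset : {k : Fin N | k ∈ A ∨ k ∉ (Finset.univ : Finset (Fin N))} = A := by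
        ext k; simp
      rw [hset] at hkey; exact hkey
    have himg : GraphProd.xg G m '' A
        = {x : PresentedGroup (grels G m) |
            ∃ i, (∀ j, j ≠ i → G.Adj i j) ∧ x = PresentedGroup.of i} := by
      ext x
      constructor
      · rintro ⟨k, hk, rfl⟩; exact ⟨k, hk, rfl⟩
      · rintro ⟨k, hk, rfl⟩; exact ⟨k, hk, rfl⟩
    rw [GraphProd.WS, himg] at hzA
    exact hzA
  · rw [Subgroup.closure_le]
    rintro x ⟨k, hk, rfl⟩
    exact GraphProd.xg_central G m hk
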